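/- The O-information decomposes as Ω(X) = Σ_{k=1}^{n−1} (n−2k)·u_k(X). -/

import Mathlib

open MeasureTheory Finset

noncomputable section

variable {Ω : Type*} [MeasurableSpace Ω]

/-- Shannon entropy of a finite-valued random variable `Z` under the measure `μ`
(with the convention that the entropy of an empty tuple is `negMulLog (μ univ) = 0`
for a probability measure). -/
def ent {α : Type*} [Fintype α] (μ : Measure Ω) (Z : Ω → α) : ℝ :=
  ∑ z : α, Real.negMulLog ((μ (Z ⁻¹' {z})).toReal)

/-- Conditional entropy `H(A | B)`. -/
def condEnt {α β : Type*} [Fintype α] [Fintype β] (μ : Measure Ω)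
    (A : Ω → α) (B : Ω → β) : ℝ :=
  ent μ (fun ω => (A ω, B ω)) - ent μ B

/-- Mutual information `I(A ; B)`. -/
def mi {α β : Type*} [Fintype α] [Fintype β] (μ : Measure Ω)
    (A : Ω → α) (B : Ω → β) : ℝ :=
  ent μ A + ent μ B - ent μ (fun ω => (A ω, B ω))

/-- Conditional mutual information `I(A ; B | C)`. -/
def cmi {α β γ : Type*} [Fintype α] [Fintype β] [Fintype γ] (μ : Measure Ω)
    (A : Ω → α) (B : Ω → β) (C : Ω → γ) : ℝ :=
  ent μ (fun ω => (A ω, C ω)) + ent μ (fun ω => (B ω, C ω))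
    - ent μ (fun ω => (A ω, B ω, C ω)) - ent μ C

/-- The sub-tuple `X^a = (X_i)_{i ∈ a}` of the random vector `X = (X_1, …, X_n)`. -/
def restr {n : ℕ} {S : Type*} (X : Fin n → Ω → S) (a : Finset (Fin n)) :
    Ω → (a → S) :=
  fun ω i => X i.1 ω

/-- Average subset entropy `r_k(X) = C(n,k)⁻¹ ∑_{|a| = k} H(X^a)`. -/
def rE {n : ℕ} {S : Type*} [Fintype S] (μ : Measure Ω) (X : Fin n → Ω → S) (k : ℕ) : ℝ :=
  ((n.choose k : ℝ))⁻¹ *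
    ∑ a ∈ univ.powerset.filter (fun a : Finset (Fin n) => a.card = k), ent μ (restr X a)

/-- Average conditional pairwise mutual information
`u_k(X) = (C(n,k+1) C(k+1,2))⁻¹ ∑_{i<j} ∑_{|a| = k-1, i,j ∉ a} I(X_i ; X_j | X^a)`. -/
def uI {n : ℕ} {S : Type*} [Fintype S] (μ : Measure Ω) (X : Fin n → Ω → S) (k : ℕ) : ℝ :=
  ((n.choose (k + 1) : ℝ) * ((k + 1).choose 2 : ℝ))⁻¹ *
    ∑ p ∈ univ.filter (fun p : Fin n × Fin n => p.1 < p.2),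
      ∑ a ∈ (univ \ ({p.1, p.2} : Finset (Fin n))).powerset.filter
          (fun a : Finset (Fin n) => a.card = k - 1),
        cmi μ (X p.1) (X p.2) (restr X a)


section AuxEntropy

lemma ent_comp {α β : Type*} [Fintype α] [Fintype β] (μ : Measure Ω)
    (Z : Ω → α) (f : α → β) (hf : Function.Injective f) :
    ent μ (fun ω => f (Z ω)) = ent μ Z := by
  classical
  unfold ent
  rw [← Finset.sum_subset (Finset.subset_univ (Finset.univ.image f))
    (by
      intro z _ hz
      have : (fun ω => f (Z ω)) ⁻¹' {z} = ∅ := by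
        ext ω
        simp only [Set.mem_preimage, Set.mem_singleton_iff, Set.mem_empty_iff_false, iff_false]
        intro h
        exact hz (Finset.mem_image.mpr ⟨Z ω, Finset.mem_univ _, h⟩)
      simp [this])]
  rw [Finset.sum_image (fun x _ y _ h => hf h)]
  refine Finset.sum_congr rfl fun x _ => ?_
  have : (fun ω => f (Z ω)) ⁻¹' {f x} = Z ⁻¹' {x} := by
    ext ω; simp [hf.eq_iff]
  rw [this]

def splitF {n : ℕ} {S : Type*} (i : Fin n) (a : Finset (Fin n)) :
    ({x // x ∈ insert i a} → S) → S × ({x // x ∈ a} → S) :=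
  fun g => (g ⟨i, Finset.mem_insert_self i a⟩,
    fun x => g ⟨x.1, Finset.mem_insert_of_mem x.2⟩)

lemma splitF_inj {n : ℕ} {S : Type*} (i : Fin n) (a : Finset (Fin n)) :
    Function.Injective (splitF (S := S) i a) := by
  intro g1 g2 h
  have h1 := congrArg Prod.fst h
  have h2 := congrArg Prod.snd h
  funext ⟨x, hx⟩
  rcases Finset.mem_insert.mp hx with h' | h'
  · subst h'
    exact h1
  · exact congrFun h2 ⟨x, h'⟩

variable {n : ℕ} {S : Type*} [Fintype S]

lemma ent_pair (μ : Measure Ω) (X : Fin n → Ω → S) (i : Fin n) (a : Finset (Fin n)) :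
    ent μ (fun ω => (X i ω, restr X a ω)) = ent μ (restr X (insert i a)) := by
  have h := ent_comp μ (restr X (insert i a)) (splitF i a) (splitF_inj i a)
  have he : (fun ω => splitF (S := S) i a (restr X (insert i a) ω))
      = fun ω => (X i ω, restr X a ω) := rfl
  rw [he] at h
  exact h

lemma ent_triple (μ : Measure Ω) (X : Fin n → Ω → S) (i j : Fin n) (a : Finset (Fin n)) :
    ent μ (fun ω => (X i ω, X j ω, restr X a ω))
      = ent μ (restr X (insert i (insert j a))) := by
  have h := ent_comp μ (fun ω => (X i ω, restr X (insert j a) ω))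
      (Prod.map id (splitF j a))
      (Function.Injective.prodMap Function.injective_id (splitF_inj j a))
  have he : (fun ω => Prod.map id (splitF (S := S) j a) (X i ω, restr X (insert j a) ω))
      = fun ω => (X i ω, X j ω, restr X a ω) := rfl
  rw [he] at h
  rw [h, ent_pair]

lemma ent_single (μ : Measure Ω) (X : Fin n → Ω → S) (i : Fin n) :
    ent μ (X i) = ent μ (restr X ({i} : Finset (Fin n))) := by
  have h := ent_comp μ (restr X ({i} : Finset (Fin n)))
    (fun g : {x // x ∈ ({i} : Finset (Fin n))} → S => g ⟨i, Finset.mem_singleton_self i⟩)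
    (by
      intro g1 g2 h
      funext ⟨x, hx⟩
      have hxi : x = i := Finset.mem_singleton.mp hx
      subst hxi
      exact h)
  have he : (fun ω => restr X ({i} : Finset (Fin n)) ω ⟨i, Finset.mem_singleton_self i⟩)
      = X i := rfl
  rw [he] at h
  exact h

lemma ent_empty (μ : Measure Ω) [IsProbabilityMeasure μ] (X : Fin n → Ω → S) :
    ent μ (restr X (∅ : Finset (Fin n))) = 0 := by
  unfold ent
  have h : ∀ z : ((∅ : Finset (Fin n)) → S), restr X ∅ ⁻¹' {z} = Set.univ := by
    intro z
    ext ω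
    simp only [Set.mem_preimage, Set.mem_singleton_iff, Set.mem_univ, iff_true]
    funext x
    exact absurd x.2 (Finset.notMem_empty _)
  simp [h]


end AuxEntropy


section comb
variable {α β : Type*} [Fintype α] [Fintype β]

lemma sum_prod_filter {M : Type*} [AddCommMonoid M] (P : α → Prop) [DecidablePred P]
    (Q : α → β → Prop) [∀ a, DecidablePred (Q a)] (f : α → β → M) :
    ∑ a ∈ univ.filter P, ∑ b ∈ univ.filter (Q a), f a b
      = ∑ q ∈ univ.filter (fun q : α × β => P q.1 ∧ Q q.1 q.2), f q.1 q.2 := by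
  simp only [Finset.sum_filter, Fintype.sum_prod_type]
  refine Finset.sum_congr rfl fun a _ => ?_
  by_cases h : P a <;> simp [h]

lemma sum_group_snd {M : Type*} [AddCommMonoid M] (C : α × β → Prop) [DecidablePred C]
    (f : β → M) :
    ∑ q ∈ univ.filter C, f q.2
      = ∑ b : β, (univ.filter fun a : α => C (a, b)).card • f b := by
  simp only [Finset.sum_filter, Fintype.sum_prod_type_right]
  refine Finset.sum_congr rfl fun b _ => ?_
  rw [← Finset.sum_filter, Finset.sum_const]

lemma sum_ne_pairs {M : Type*} [AddCommMonoid M] {n : ℕ}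
    (F : Fin n × Fin n → M) :
    ∑ p ∈ univ.filter (fun p : Fin n × Fin n => p.1 ≠ p.2), F p
      = ∑ p ∈ univ.filter (fun p : Fin n × Fin n => p.1 < p.2), (F p + F p.swap) := by
  rw [Finset.sum_add_distrib]
  have h2 : ∑ p ∈ univ.filter (fun p : Fin n × Fin n => p.1 < p.2), F p.swap
      = ∑ p ∈ univ.filter (fun p : Fin n × Fin n => p.2 < p.1), F p := by
    refine Finset.sum_nbij' Prod.swap Prod.swap ?_ ?_ ?_ ?_ ?_ <;>
      simp [Finset.mem_filter]
  rw [h2, ← Finset.sum_filter_add_sum_filter_not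
    (univ.filter (fun p : Fin n × Fin n => p.1 ≠ p.2)) (fun p => p.1 < p.2)]
  rw [Finset.filter_filter, Finset.filter_filter]
  congr 1
  · refine Finset.sum_congr (Finset.filter_congr fun p _ => ?_) fun _ _ => rfl
    constructor
    · exact fun h => h.2
    · exact fun h => ⟨ne_of_lt h, h⟩
  · refine Finset.sum_congr (Finset.filter_congr fun p _ => ?_) fun _ _ => rfl
    constructor
    · exact fun h => lt_of_le_of_ne (not_lt.mp h.2) (Ne.symm h.1)
    · exact fun h => ⟨(ne_of_lt h).symm, not_lt_of_gt h⟩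

end comb


section AuxComb



variable {n : ℕ}

/-- Group a sum over (pair, set) by the set component, when the count of pairs is constant. -/
lemma group_const (C : (Fin n × Fin n) → Finset (Fin n) → Prop)
    [∀ pr b, Decidable (C pr b)] (m N : ℕ) (E : Finset (Fin n) → ℝ)
    (h1 : ∀ pr b, C pr b → b.card = m)
    (h2 : ∀ b : Finset (Fin n), b.card = m → (univ.filter fun pr => C pr b).card = N) :
    ∑ q ∈ univ.filter (fun q : (Fin n × Fin n) × Finset (Fin n) => C q.1 q.2), E q.2
      = (N : ℝ) * ∑ b ∈ univ.powerset.filter (fun b : Finset (Fin n) => b.card = m), E b := by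
  rw [sum_group_snd, Finset.powerset_univ, Finset.mul_sum]
  rw [← Finset.sum_filter_of_ne (s := (univ : Finset (Finset (Fin n))))
    (p := fun b => b.card = m)
    (f := fun b => (univ.filter fun pr => C pr b).card • E b) ?_]
  · refine Finset.sum_congr rfl fun b hb => ?_
    rw [h2 b (Finset.mem_filter.mp hb).2, nsmul_eq_mul]
  · intro b _ hne
    by_contra hcard
    apply hne
    have : (univ.filter fun pr => C pr b) = ∅ := by
      rw [Finset.filter_eq_empty_iff]
      intro pr _ hC
      exact hcard (h1 pr b hC)
    rw [this]
    simp

lemma card_in_out (b : Finset (Fin n)) :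
    (univ.filter fun pr : Fin n × Fin n => pr.1 ∈ b ∧ pr.2 ∉ b).card
      = b.card * (n - b.card) := by
  have : (univ.filter fun pr : Fin n × Fin n => pr.1 ∈ b ∧ pr.2 ∉ b) = b ×ˢ bᶜ := by
    ext pr; simp [Finset.mem_product]
  rw [this, Finset.card_product, Finset.card_compl, Fintype.card_fin]

lemma card_out_in (b : Finset (Fin n)) :
    (univ.filter fun pr : Fin n × Fin n => pr.2 ∈ b ∧ pr.1 ∉ b).card
      = b.card * (n - b.card) := by
  have : (univ.filter fun pr : Fin n × Fin n => pr.2 ∈ b ∧ pr.1 ∉ b) = bᶜ ×ˢ b := by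
    ext pr; simp [Finset.mem_product]; tauto
  rw [this, Finset.card_product, Finset.card_compl, Fintype.card_fin, Nat.mul_comm]

lemma card_both_in (b : Finset (Fin n)) :
    (univ.filter fun pr : Fin n × Fin n => pr.1 ∈ b ∧ pr.2 ∈ b ∧ pr.1 ≠ pr.2).card
      = b.card * (b.card - 1) := by
  have : (univ.filter fun pr : Fin n × Fin n => pr.1 ∈ b ∧ pr.2 ∈ b ∧ pr.1 ≠ pr.2)
      = b.offDiag := by
    ext pr; simp [Finset.mem_offDiag]
  rw [this, Finset.offDiag_card, Nat.mul_sub_one]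

lemma card_both_out (b : Finset (Fin n)) :
    (univ.filter fun pr : Fin n × Fin n => pr.1 ≠ pr.2 ∧ pr.1 ∉ b ∧ pr.2 ∉ b).card
      = (n - b.card) * (n - b.card - 1) := by
  have : (univ.filter fun pr : Fin n × Fin n => pr.1 ≠ pr.2 ∧ pr.1 ∉ b ∧ pr.2 ∉ b)
      = bᶜ.offDiag := by
    ext pr; simp [Finset.mem_offDiag]; tauto
  rw [this, Finset.offDiag_card, Finset.card_compl, Fintype.card_fin, Nat.mul_sub_one]





variable {n : ℕ} (E : Finset (Fin n) → ℝ) (m : ℕ)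

lemma reindex1 :
    ∑ q ∈ univ.filter (fun q : (Fin n × Fin n) × Finset (Fin n) =>
        q.1.1 ≠ q.1.2 ∧ q.1.1 ∉ q.2 ∧ q.1.2 ∉ q.2 ∧ q.2.card = m), E (insert q.1.1 q.2)
      = ∑ q ∈ univ.filter (fun q : (Fin n × Fin n) × Finset (Fin n) =>
        q.1.1 ∈ q.2 ∧ q.1.2 ∉ q.2 ∧ q.2.card = m + 1), E q.2 := by
  refine Finset.sum_nbij' (fun q => (q.1, insert q.1.1 q.2))
    (fun q => (q.1, q.2.erase q.1.1)) ?_ ?_ ?_ ?_ ?_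
  · rintro ⟨⟨i, j⟩, a⟩ hq
    simp only [Finset.mem_filter, Finset.mem_univ, true_and] at hq ⊢
    obtain ⟨hne, hi, hj, hc⟩ := hq
    exact ⟨Finset.mem_insert_self i a,
      fun h => (Finset.mem_insert.mp h).elim (fun e => hne e.symm) hj,
      by rw [Finset.card_insert_of_notMem hi, hc]⟩
  · rintro ⟨⟨i, j⟩, b⟩ hq
    simp only [Finset.mem_filter, Finset.mem_univ, true_and] at hq ⊢
    obtain ⟨hi, hj, hc⟩ := hq
    exact ⟨fun e => hj (e ▸ hi), Finset.notMem_erase i b,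
      fun h => hj (Finset.mem_of_mem_erase h),
      by rw [Finset.card_erase_of_mem hi]; omega⟩
  · rintro ⟨⟨i, j⟩, a⟩ hq
    simp only [Finset.mem_filter, Finset.mem_univ, true_and] at hq
    simp [Finset.erase_insert hq.2.1]
  · rintro ⟨⟨i, j⟩, b⟩ hq
    simp only [Finset.mem_filter, Finset.mem_univ, true_and] at hq
    simp [Finset.insert_erase hq.1]
  · intro q _
    rfl

lemma reindex2 :
    ∑ q ∈ univ.filter (fun q : (Fin n × Fin n) × Finset (Fin n) =>
        q.1.1 ≠ q.1.2 ∧ q.1.1 ∉ q.2 ∧ q.1.2 ∉ q.2 ∧ q.2.card = m), E (insert q.1.2 q.2)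
      = ∑ q ∈ univ.filter (fun q : (Fin n × Fin n) × Finset (Fin n) =>
        q.1.2 ∈ q.2 ∧ q.1.1 ∉ q.2 ∧ q.2.card = m + 1), E q.2 := by
  refine Finset.sum_nbij' (fun q => (q.1, insert q.1.2 q.2))
    (fun q => (q.1, q.2.erase q.1.2)) ?_ ?_ ?_ ?_ ?_
  · rintro ⟨⟨i, j⟩, a⟩ hq
    simp only [Finset.mem_filter, Finset.mem_univ, true_and] at hq ⊢
    obtain ⟨hne, hi, hj, hc⟩ := hq
    exact ⟨Finset.mem_insert_self j a,
      fun h => (Finset.mem_insert.mp h).elim (fun e => hne e) hi,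
      by rw [Finset.card_insert_of_notMem hj, hc]⟩
  · rintro ⟨⟨i, j⟩, b⟩ hq
    simp only [Finset.mem_filter, Finset.mem_univ, true_and] at hq ⊢
    obtain ⟨hj, hi, hc⟩ := hq
    exact ⟨fun e => hi (e ▸ hj), fun h => hi (Finset.mem_of_mem_erase h),
      Finset.notMem_erase j b,
      by rw [Finset.card_erase_of_mem hj]; omega⟩
  · rintro ⟨⟨i, j⟩, a⟩ hq
    simp only [Finset.mem_filter, Finset.mem_univ, true_and] at hq
    simp [Finset.erase_insert hq.2.2.1]
  · rintro ⟨⟨i, j⟩, b⟩ hq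
    simp only [Finset.mem_filter, Finset.mem_univ, true_and] at hq
    simp [Finset.insert_erase hq.1]
  · intro q _
    rfl

lemma reindex3 :
    ∑ q ∈ univ.filter (fun q : (Fin n × Fin n) × Finset (Fin n) =>
        q.1.1 ≠ q.1.2 ∧ q.1.1 ∉ q.2 ∧ q.1.2 ∉ q.2 ∧ q.2.card = m),
        E (insert q.1.1 (insert q.1.2 q.2))
      = ∑ q ∈ univ.filter (fun q : (Fin n × Fin n) × Finset (Fin n) =>
        q.1.1 ∈ q.2 ∧ q.1.2 ∈ q.2 ∧ q.1.1 ≠ q.1.2 ∧ q.2.card = m + 2), E q.2 := by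
  refine Finset.sum_nbij' (fun q => (q.1, insert q.1.1 (insert q.1.2 q.2)))
    (fun q => (q.1, (q.2.erase q.1.1).erase q.1.2)) ?_ ?_ ?_ ?_ ?_
  · rintro ⟨⟨i, j⟩, a⟩ hq
    simp only [Finset.mem_filter, Finset.mem_univ, true_and] at hq ⊢
    obtain ⟨hne, hi, hj, hc⟩ := hq
    have hi' : i ∉ insert j a := fun h => (Finset.mem_insert.mp h).elim hne hi
    refine ⟨Finset.mem_insert_self i _,
      Finset.mem_insert_of_mem (Finset.mem_insert_self j a), hne, ?_⟩
    rw [Finset.card_insert_of_notMem hi', Finset.card_insert_of_notMem hj, hc]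
  · rintro ⟨⟨i, j⟩, b⟩ hq
    simp only [Finset.mem_filter, Finset.mem_univ, true_and] at hq ⊢
    obtain ⟨hi, hj, hne, hc⟩ := hq
    refine ⟨hne, fun h => ?_, fun h => ?_, ?_⟩
    · exact (Finset.mem_erase.mp (Finset.mem_of_mem_erase h)).1 rfl
    · exact (Finset.mem_erase.mp h).1 rfl
    · rw [Finset.card_erase_of_mem (Finset.mem_erase.mpr ⟨Ne.symm hne, hj⟩),
        Finset.card_erase_of_mem hi]
      omega
  · rintro ⟨⟨i, j⟩, a⟩ hq
    simp only [Finset.mem_filter, Finset.mem_univ, true_and] at hq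
    obtain ⟨hne, hi, hj, hc⟩ := hq
    have hi' : i ∉ insert j a := fun h => (Finset.mem_insert.mp h).elim hne hi
    simp [Finset.erase_insert hi', Finset.erase_insert hj]
  · rintro ⟨⟨i, j⟩, b⟩ hq
    simp only [Finset.mem_filter, Finset.mem_univ, true_and] at hq
    obtain ⟨hi, hj, hne, hc⟩ := hq
    have h1 : j ∈ b.erase i := Finset.mem_erase.mpr ⟨Ne.symm hne, hj⟩
    simp [Finset.insert_erase h1, Finset.insert_erase hi]
  · intro q _
    rfl




lemma count_core {n : ℕ} (E : Finset (Fin n) → ℝ) (m : ℕ) :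
    2 * (∑ p ∈ univ.filter (fun p : Fin n × Fin n => p.1 < p.2),
      ∑ a ∈ (univ \ ({p.1, p.2} : Finset (Fin n))).powerset.filter
          (fun a : Finset (Fin n) => a.card = m),
        (E (insert p.1 a) + E (insert p.2 a) - E (insert p.1 (insert p.2 a)) - E a))
    = 2 * (((m+1) * (n - (m+1)) : ℕ) : ℝ) *
        (∑ b ∈ univ.powerset.filter (fun b : Finset (Fin n) => b.card = m + 1), E b)
      - (((m+2) * ((m+2) - 1) : ℕ) : ℝ) *
        (∑ b ∈ univ.powerset.filter (fun b : Finset (Fin n) => b.card = m + 2), E b)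
      - (((n-m) * (n-m-1) : ℕ) : ℝ) *
        (∑ b ∈ univ.powerset.filter (fun b : Finset (Fin n) => b.card = m), E b) := by
  have hdom : ∀ p : Fin n × Fin n,
      (univ \ ({p.1, p.2} : Finset (Fin n))).powerset.filter
          (fun a : Finset (Fin n) => a.card = m)
        = univ.filter (fun a : Finset (Fin n) => p.1 ∉ a ∧ p.2 ∉ a ∧ a.card = m) := by
    intro p
    ext a
    simp only [Finset.mem_filter, Finset.mem_powerset, Finset.subset_sdiff,
      Finset.subset_univ, true_and, Finset.disjoint_insert_right,
      Finset.disjoint_singleton_right, Finset.mem_univ, and_assoc]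
  set G : Fin n × Fin n → ℝ := fun p =>
    ∑ a ∈ univ.filter (fun a : Finset (Fin n) => p.1 ∉ a ∧ p.2 ∉ a ∧ a.card = m),
      (E (insert p.1 a) + E (insert p.2 a) - E (insert p.1 (insert p.2 a)) - E a) with hG
  have hGdom : ∀ p : Fin n × Fin n,
      ∑ a ∈ (univ \ ({p.1, p.2} : Finset (Fin n))).powerset.filter
          (fun a : Finset (Fin n) => a.card = m),
        (E (insert p.1 a) + E (insert p.2 a) - E (insert p.1 (insert p.2 a)) - E a) = G p := by
    intro p
    rw [hG, hdom p]
  have hsym : ∀ p : Fin n × Fin n, G p.swap = G p := by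
    intro p
    rw [hG]
    simp only [Prod.fst_swap, Prod.snd_swap]
    refine Finset.sum_nbij' id id ?_ ?_ ?_ ?_ ?_
    · intro a ha
      simp only [Finset.mem_filter, Finset.mem_univ, true_and] at ha ⊢
      tauto
    · intro a ha
      simp only [Finset.mem_filter, Finset.mem_univ, true_and] at ha ⊢
      tauto
    · intro a _; rfl
    · intro a _; rfl
    · intro a _
      simp only [id]
      rw [Finset.insert_comm]
      ring
  have h2G : 2 * ∑ p ∈ univ.filter (fun p : Fin n × Fin n => p.1 < p.2), G p
      = ∑ p ∈ univ.filter (fun p : Fin n × Fin n => p.1 ≠ p.2), G p := by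
    have h := sum_ne_pairs (n := n) G
    rw [h, Finset.mul_sum]
    refine Finset.sum_congr rfl fun p _ => ?_
    rw [hsym p]
    ring
  have hsplit : ∑ p ∈ univ.filter (fun p : Fin n × Fin n => p.1 ≠ p.2), G p
      = ∑ q ∈ univ.filter (fun q : (Fin n × Fin n) × Finset (Fin n) =>
          q.1.1 ≠ q.1.2 ∧ q.1.1 ∉ q.2 ∧ q.1.2 ∉ q.2 ∧ q.2.card = m),
        (E (insert q.1.1 q.2) + E (insert q.1.2 q.2)
          - E (insert q.1.1 (insert q.1.2 q.2)) - E q.2) := by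
    exact sum_prod_filter (fun p : Fin n × Fin n => p.1 ≠ p.2)
      (fun p (a : Finset (Fin n)) => p.1 ∉ a ∧ p.2 ∉ a ∧ a.card = m)
      (fun p a => E (insert p.1 a) + E (insert p.2 a)
        - E (insert p.1 (insert p.2 a)) - E a)
  have e1 : ∑ q ∈ univ.filter (fun q : (Fin n × Fin n) × Finset (Fin n) =>
        q.1.1 ≠ q.1.2 ∧ q.1.1 ∉ q.2 ∧ q.1.2 ∉ q.2 ∧ q.2.card = m), E (insert q.1.1 q.2)
      = (((m+1) * (n - (m+1)) : ℕ) : ℝ) *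
        (∑ b ∈ univ.powerset.filter (fun b : Finset (Fin n) => b.card = m + 1), E b) := by
    refine (reindex1 E m).trans ?_
    refine group_const (fun pr b => pr.1 ∈ b ∧ pr.2 ∉ b ∧ b.card = m + 1) (m+1)
      ((m+1) * (n - (m+1))) E (fun pr b h => h.2.2) (fun b hb => ?_)
    rw [Finset.filter_congr (fun pr _ => by simp [hb] :
      ∀ pr ∈ univ, ((pr : Fin n × Fin n).1 ∈ b ∧ pr.2 ∉ b ∧ b.card = m + 1)
        ↔ (pr.1 ∈ b ∧ pr.2 ∉ b))]
    rw [card_in_out b, hb]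
  have e2 : ∑ q ∈ univ.filter (fun q : (Fin n × Fin n) × Finset (Fin n) =>
        q.1.1 ≠ q.1.2 ∧ q.1.1 ∉ q.2 ∧ q.1.2 ∉ q.2 ∧ q.2.card = m), E (insert q.1.2 q.2)
      = (((m+1) * (n - (m+1)) : ℕ) : ℝ) *
        (∑ b ∈ univ.powerset.filter (fun b : Finset (Fin n) => b.card = m + 1), E b) := by
    refine (reindex2 E m).trans ?_
    refine group_const (fun pr b => pr.2 ∈ b ∧ pr.1 ∉ b ∧ b.card = m + 1) (m+1)
      ((m+1) * (n - (m+1))) E (fun pr b h => h.2.2) (fun b hb => ?_)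
    rw [Finset.filter_congr (fun pr _ => by simp [hb] :
      ∀ pr ∈ univ, ((pr : Fin n × Fin n).2 ∈ b ∧ pr.1 ∉ b ∧ b.card = m + 1)
        ↔ (pr.2 ∈ b ∧ pr.1 ∉ b))]
    rw [card_out_in b, hb]
  have e3 : ∑ q ∈ univ.filter (fun q : (Fin n × Fin n) × Finset (Fin n) =>
        q.1.1 ≠ q.1.2 ∧ q.1.1 ∉ q.2 ∧ q.1.2 ∉ q.2 ∧ q.2.card = m),
        E (insert q.1.1 (insert q.1.2 q.2))
      = (((m+2) * ((m+2) - 1) : ℕ) : ℝ) *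
        (∑ b ∈ univ.powerset.filter (fun b : Finset (Fin n) => b.card = m + 2), E b) := by
    refine (reindex3 E m).trans ?_
    refine group_const (fun pr b => pr.1 ∈ b ∧ pr.2 ∈ b ∧ pr.1 ≠ pr.2 ∧ b.card = m + 2) (m+2)
      ((m+2) * ((m+2) - 1)) E (fun pr b h => h.2.2.2) (fun b hb => ?_)
    rw [Finset.filter_congr (fun pr _ => by simp [hb, and_assoc] :
      ∀ pr ∈ univ, ((pr : Fin n × Fin n).1 ∈ b ∧ pr.2 ∈ b ∧ pr.1 ≠ pr.2 ∧ b.card = m + 2)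
        ↔ (pr.1 ∈ b ∧ pr.2 ∈ b ∧ pr.1 ≠ pr.2))]
    rw [card_both_in b, hb]
  have e4 : ∑ q ∈ univ.filter (fun q : (Fin n × Fin n) × Finset (Fin n) =>
        q.1.1 ≠ q.1.2 ∧ q.1.1 ∉ q.2 ∧ q.1.2 ∉ q.2 ∧ q.2.card = m), E q.2
      = (((n-m) * (n-m-1) : ℕ) : ℝ) *
        (∑ b ∈ univ.powerset.filter (fun b : Finset (Fin n) => b.card = m), E b) := by
    refine group_const (fun pr b => pr.1 ≠ pr.2 ∧ pr.1 ∉ b ∧ pr.2 ∉ b ∧ b.card = m) m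
      ((n-m) * (n-m-1)) E (fun pr b h => h.2.2.2) (fun b hb => ?_)
    rw [Finset.filter_congr (fun pr _ => by simp [hb, and_assoc] :
      ∀ pr ∈ univ, ((pr : Fin n × Fin n).1 ≠ pr.2 ∧ pr.1 ∉ b ∧ pr.2 ∉ b ∧ b.card = m)
        ↔ (pr.1 ≠ pr.2 ∧ pr.1 ∉ b ∧ pr.2 ∉ b))]
    rw [card_both_out b, hb]
  have hfour : ∑ q ∈ univ.filter (fun q : (Fin n × Fin n) × Finset (Fin n) =>
        q.1.1 ≠ q.1.2 ∧ q.1.1 ∉ q.2 ∧ q.1.2 ∉ q.2 ∧ q.2.card = m),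
      (E (insert q.1.1 q.2) + E (insert q.1.2 q.2)
        - E (insert q.1.1 (insert q.1.2 q.2)) - E q.2)
      = (∑ q ∈ univ.filter (fun q : (Fin n × Fin n) × Finset (Fin n) =>
          q.1.1 ≠ q.1.2 ∧ q.1.1 ∉ q.2 ∧ q.1.2 ∉ q.2 ∧ q.2.card = m), E (insert q.1.1 q.2))
        + (∑ q ∈ univ.filter (fun q : (Fin n × Fin n) × Finset (Fin n) =>
          q.1.1 ≠ q.1.2 ∧ q.1.1 ∉ q.2 ∧ q.1.2 ∉ q.2 ∧ q.2.card = m), E (insert q.1.2 q.2))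
        - (∑ q ∈ univ.filter (fun q : (Fin n × Fin n) × Finset (Fin n) =>
          q.1.1 ≠ q.1.2 ∧ q.1.1 ∉ q.2 ∧ q.1.2 ∉ q.2 ∧ q.2.card = m),
            E (insert q.1.1 (insert q.1.2 q.2)))
        - (∑ q ∈ univ.filter (fun q : (Fin n × Fin n) × Finset (Fin n) =>
          q.1.1 ≠ q.1.2 ∧ q.1.1 ∉ q.2 ∧ q.1.2 ∉ q.2 ∧ q.2.card = m), E q.2) := by
    rw [Finset.sum_sub_distrib, Finset.sum_sub_distrib, Finset.sum_add_distrib]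
  calc 2 * (∑ p ∈ univ.filter (fun p : Fin n × Fin n => p.1 < p.2),
      ∑ a ∈ (univ \ ({p.1, p.2} : Finset (Fin n))).powerset.filter
          (fun a : Finset (Fin n) => a.card = m),
        (E (insert p.1 a) + E (insert p.2 a) - E (insert p.1 (insert p.2 a)) - E a))
      = 2 * ∑ p ∈ univ.filter (fun p : Fin n × Fin n => p.1 < p.2), G p := by
        rw [Finset.sum_congr rfl fun p _ => hGdom p]
    _ = _ := by
        rw [h2G, hsplit, hfour, e1, e2, e3, e4]
        ring



lemma two_mul_choose_two : ∀ j : ℕ, 2 * j.choose 2 = j * (j - 1) := by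
  intro j
  induction j with
  | zero => decide
  | succ jj ih =>
    rw [Nat.choose_succ_succ]
    cases jj with
    | zero => decide
    | succ t =>
      rw [Nat.mul_add, ih]
      simp only [Nat.choose_one_right, Nat.add_sub_cancel]
      ring

lemma telescope (n : ℕ) (hn : 2 ≤ n) (r : ℕ → ℝ) (h0 : r 0 = 0) :
    ∑ k ∈ Finset.Icc 1 (n-1), ((n:ℝ) - 2*(k:ℝ)) * (2 * r k - r (k+1) - r (k-1))
      = ((n:ℝ) - 2) * r n + (n:ℝ) * r 1 - (n:ℝ) * r (n-1) := by
  set g : ℕ → ℝ := fun j => -((n:ℝ) - 2*(j:ℝ)) * r (j-1) + ((n:ℝ) - 2*(j:ℝ) + 2) * r j with hg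
  have hIcc : Finset.Icc 1 (n-1) = Finset.Ico 1 n := by
    rw [← Finset.Ico_add_one_right_eq_Icc]
    congr 1
    omega
  rw [hIcc, Finset.sum_Ico_eq_sum_range]
  have hstep : ∀ i : ℕ, ((n:ℝ) - 2*((1+i : ℕ):ℝ)) * (2 * r (1+i) - r (1+i+1) - r (1+i-1))
      = g (1+i) - g (1+(i+1)) := by
    intro i
    have e1 : 1 + i - 1 = i := by omega
    have e2 : 1 + (i + 1) - 1 = 1 + i := by omega
    have e3 : 1 + (i + 1) = 1 + i + 1 := by omega
    rw [hg]
    simp only [e1, e2, e3]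
    push_cast
    ring
  rw [Finset.sum_congr rfl fun i _ => hstep i]
  rw [Finset.sum_range_sub' (fun i => g (1+i)) (n-1)]
  have e3 : 1 + (n - 1) = n := by omega
  rw [e3, hg]
  simp only []
  have e4 : (1:ℕ) - 1 = 0 := rfl
  rw [e4, h0]
  push_cast
  ring

lemma scalar_a (n m : ℕ) (h : m + 2 ≤ n) :
    (((n.choose (m+2) : ℝ)) * (((m+2).choose 2 : ℕ) : ℝ))⁻¹
        * (2 * (((m+1) * (n - (m+1)) : ℕ) : ℝ))
      = 4 * ((n.choose (m+1) : ℝ))⁻¹ := by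
  have hnat : 2 * ((m + 1) * (n - (m + 1))) * n.choose (m + 1) = 4 * (n.choose (m + 2) * (m + 2).choose 2) := by
    have h1 : 2 * (m+2).choose 2 = (m+2) * (m+1) := two_mul_choose_two (m+2)
    have h2 : n.choose (m+2) * (m+2) = n.choose (m+1) * (n - (m+1)) := Nat.choose_succ_right_eq n (m+1)
    calc 2 * ((m+1) * (n - (m+1))) * n.choose (m+1)
        = 2 * (n.choose (m+1) * (n - (m+1))) * (m+1) := by ring
      _ = 2 * (n.choose (m+2) * (m+2)) * (m+1) := by rw [h2]
      _ = 2 * n.choose (m+2) * ((m+2) * (m+1)) := by ring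
      _ = 2 * n.choose (m+2) * (2 * (m+2).choose 2) := by rw [h1]
      _ = 4 * (n.choose (m+2) * (m+2).choose 2) := by ring
  have hc1 : (0:ℝ) < (n.choose (m+2) : ℝ) := by
    exact_mod_cast Nat.choose_pos h
  have hc2 : (0:ℝ) < (((m+2).choose 2 : ℕ) : ℝ) := by
    exact_mod_cast Nat.choose_pos (by omega)
  have hc3 : (0:ℝ) < (n.choose (m+1) : ℝ) := by
    exact_mod_cast Nat.choose_pos (by omega)
  field_simp
  exact_mod_cast hnat.trans (Nat.mul_comm _ _)

lemma scalar_b (n m : ℕ) (h : m + 2 ≤ n) :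
    (((n.choose (m+2) : ℝ)) * (((m+2).choose 2 : ℕ) : ℝ))⁻¹
        * ((((m+2) * ((m+2) - 1) : ℕ) : ℝ))
      = 2 * ((n.choose (m+2) : ℝ))⁻¹ := by
  have hnat : (m+2) * ((m+2) - 1) * n.choose (m+2) = 2 * (n.choose (m+2) * (m+2).choose 2) := by
    have h1 : 2 * (m+2).choose 2 = (m+2) * ((m+2)-1) := two_mul_choose_two (m+2)
    calc (m+2) * ((m+2)-1) * n.choose (m+2) = (2 * (m+2).choose 2) * n.choose (m+2) := by rw [h1]
      _ = 2 * (n.choose (m+2) * (m+2).choose 2) := by ring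
  have hc1 : (0:ℝ) < (n.choose (m+2) : ℝ) := by
    exact_mod_cast Nat.choose_pos h
  have hc2 : (0:ℝ) < (((m+2).choose 2 : ℕ) : ℝ) := by
    exact_mod_cast Nat.choose_pos (by omega)
  field_simp
  exact_mod_cast (two_mul_choose_two (m+2)).symm.trans (Nat.mul_comm _ _)

lemma scalar_c (n m : ℕ) (h : m + 2 ≤ n) :
    (((n.choose (m+2) : ℝ)) * (((m+2).choose 2 : ℕ) : ℝ))⁻¹
        * ((((n-m) * (n-m-1) : ℕ) : ℝ))
      = 2 * ((n.choose m : ℝ))⁻¹ := by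
  have hnat : (n-m) * (n-m-1) * n.choose m = 2 * (n.choose (m+2) * (m+2).choose 2) := by
    have h1 : 2 * (m+2).choose 2 = (m+2) * (m+1) := two_mul_choose_two (m+2)
    have h2 : n.choose (m+2) * (m+2) = n.choose (m+1) * (n - (m+1)) := Nat.choose_succ_right_eq n (m+1)
    have h3 : n.choose (m+1) * (m+1) = n.choose m * (n - m) := Nat.choose_succ_right_eq n m
    have h4 : n - (m+1) = n - m - 1 := by omega
    calc (n-m) * (n-m-1) * n.choose m
        = (n.choose m * (n - m)) * (n-m-1) := by ring
      _ = (n.choose (m+1) * (m+1)) * (n-m-1) := by rw [h3]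
      _ = (n.choose (m+1) * (n - (m+1))) * (m+1) := by rw [h4]; ring
      _ = (n.choose (m+2) * (m+2)) * (m+1) := by rw [h2]
      _ = n.choose (m+2) * ((m+2) * (m+1)) := by ring
      _ = n.choose (m+2) * (2 * (m+2).choose 2) := by rw [h1]
      _ = 2 * (n.choose (m+2) * (m+2).choose 2) := by ring
  have hc1 : (0:ℝ) < (n.choose (m+2) : ℝ) := by
    exact_mod_cast Nat.choose_pos h
  have hc2 : (0:ℝ) < (((m+2).choose 2 : ℕ) : ℝ) := by
    exact_mod_cast Nat.choose_pos (by omega)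
  have hc3 : (0:ℝ) < (n.choose m : ℝ) := by
    exact_mod_cast Nat.choose_pos (by omega)
  field_simp
  exact_mod_cast hnat.trans (Nat.mul_comm _ _)


section AuxR
variable {n : ℕ} (E : Finset (Fin n) → ℝ)

lemma R_univ : ∑ b ∈ univ.powerset.filter (fun b : Finset (Fin n) => b.card = n), E b
    = E Finset.univ := by
  have h : univ.powerset.filter (fun b : Finset (Fin n) => b.card = n) = {Finset.univ} := by
    ext b
    simp only [Finset.mem_filter, Finset.mem_powerset, Finset.subset_univ, true_and,
      Finset.mem_singleton]
    constructor
    · intro hb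
      exact Finset.eq_univ_of_card b (by rw [hb, Fintype.card_fin])
    · rintro rfl
      rw [Finset.card_univ, Fintype.card_fin]
  rw [h, Finset.sum_singleton]

lemma R_zero : ∑ b ∈ univ.powerset.filter (fun b : Finset (Fin n) => b.card = 0), E b
    = E ∅ := by
  have h : univ.powerset.filter (fun b : Finset (Fin n) => b.card = 0) = {(∅ : Finset (Fin n))} := by
    ext b
    simp [Finset.card_eq_zero]
  rw [h, Finset.sum_singleton]

lemma R_one : ∑ b ∈ univ.powerset.filter (fun b : Finset (Fin n) => b.card = 1), E b
    = ∑ j : Fin n, E {j} := by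
  have h : univ.powerset.filter (fun b : Finset (Fin n) => b.card = 1)
      = univ.image (fun j : Fin n => ({j} : Finset (Fin n))) := by
    ext b
    simp only [Finset.mem_filter, Finset.mem_powerset, Finset.subset_univ, true_and,
      Finset.mem_image, Finset.mem_univ, true_and, Finset.card_eq_one]
    constructor
    · rintro ⟨a, rfl⟩; exact ⟨a, rfl⟩
    · rintro ⟨a, rfl⟩; exact ⟨a, rfl⟩
  rw [h, Finset.sum_image (fun i _ j _ h => Finset.singleton_injective h)]

lemma R_pred (hn : 1 ≤ n) :
    ∑ b ∈ univ.powerset.filter (fun b : Finset (Fin n) => b.card = n - 1), E b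
      = ∑ j : Fin n, E ({j} : Finset (Fin n))ᶜ := by
  have h : univ.powerset.filter (fun b : Finset (Fin n) => b.card = n - 1)
      = univ.image (fun j : Fin n => ({j} : Finset (Fin n))ᶜ) := by
    ext b
    simp only [Finset.mem_filter, Finset.mem_powerset, Finset.subset_univ, true_and,
      Finset.mem_image, Finset.mem_univ, true_and]
    constructor
    · intro hb
      have hbc : bᶜ.card = 1 := by
        rw [Finset.card_compl, Fintype.card_fin, hb]
        omega
      obtain ⟨j, hj⟩ := Finset.card_eq_one.mp hbc
      exact ⟨j, by rw [← hj, compl_compl]⟩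
    · rintro ⟨j, rfl⟩
      rw [Finset.card_compl, Fintype.card_fin, Finset.card_singleton]
  rw [h, Finset.sum_image]
  intro i _ j _ hij
  exact Finset.singleton_injective (compl_injective hij)

end AuxR

section AuxMain
variable {n : ℕ} {S : Type*} [Fintype S]

lemma cmi_restr (μ : Measure Ω) (X : Fin n → Ω → S) (i j : Fin n) (a : Finset (Fin n)) :
    cmi μ (X i) (X j) (restr X a)
      = ent μ (restr X (insert i a)) + ent μ (restr X (insert j a))
        - ent μ (restr X (insert i (insert j a))) - ent μ (restr X a) := by
  unfold cmi
  rw [ent_pair, ent_pair, ent_triple]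

lemma uI_eq (μ : Measure Ω) (X : Fin n → Ω → S) (m : ℕ) (h : m + 2 ≤ n) :
    uI μ X (m+1) = 2 * rE μ X (m+1) - rE μ X (m+2) - rE μ X m := by
  unfold uI rE
  have hsummand : ∀ p : Fin n × Fin n, ∀ a ∈ (univ \ ({p.1, p.2} : Finset (Fin n))).powerset.filter
      (fun a : Finset (Fin n) => a.card = m + 1 - 1), cmi μ (X p.1) (X p.2) (restr X a)
        = (fun b => ent μ (restr X b)) (insert p.1 a) + (fun b => ent μ (restr X b)) (insert p.2 a)
          - (fun b => ent μ (restr X b)) (insert p.1 (insert p.2 a)) - (fun b => ent μ (restr X b)) a :=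
    fun p a _ => cmi_restr μ X p.1 p.2 a
  rw [Finset.sum_congr rfl fun p _ => Finset.sum_congr rfl (hsummand p)]
  have hidx : m + 1 - 1 = m := rfl
  rw [hidx]
  have hcc := count_core (fun b => ent μ (restr X b)) m
  have ha := scalar_a n m h
  have hb := scalar_b n m h
  have hc := scalar_c n m h
  have hidx2 : m + 1 + 1 = m + 2 := rfl
  rw [hidx2]
  linear_combination
    (((n.choose (m+2) : ℝ)) * (((m+2).choose 2 : ℕ) : ℝ))⁻¹ / 2 * hcc
    + (∑ b ∈ univ.powerset.filter (fun b : Finset (Fin n) => b.card = m + 1),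
        ent μ (restr X b)) / 2 * ha
    - (∑ b ∈ univ.powerset.filter (fun b : Finset (Fin n) => b.card = m + 2),
        ent μ (restr X b)) / 2 * hb
    - (∑ b ∈ univ.powerset.filter (fun b : Finset (Fin n) => b.card = m),
        ent μ (restr X b)) / 2 * hc

end AuxMain
end AuxComb

/-- `Ω(X) = ∑_{k=1}^{n-1} (n-2k) u_k(X)`. -/
theorem oinfo_decomposition {Ω S : Type*} [MeasurableSpace Ω]
    [Fintype S] [MeasurableSpace S] [MeasurableSingletonClass S]
    {n : ℕ} (hn : 2 ≤ n) (μ : Measure Ω) [IsProbabilityMeasure μ]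
    (X : Fin n → Ω → S) (hX : ∀ i, Measurable (X i)) :
    ((n : ℝ) - 2) * ent μ (restr X univ)
        + ∑ j : Fin n, (ent μ (X j) - ent μ (restr X ({j} : Finset (Fin n))ᶜ))
      = ∑ k ∈ Finset.Icc 1 (n - 1), ((n : ℝ) - 2 * (k : ℝ)) * uI μ X k := by
  have hr0 : rE μ X 0 = 0 := by
    unfold rE
    rw [R_zero (fun b => ent μ (restr X b))]
    rw [ent_empty μ X]
    simp
  have hRHS : ∀ k ∈ Finset.Icc 1 (n-1), ((n:ℝ) - 2*(k:ℝ)) * uI μ X k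
      = ((n:ℝ) - 2*(k:ℝ)) * (2 * rE μ X k - rE μ X (k+1) - rE μ X (k-1)) := by
    intro k hk
    obtain ⟨hk1, hk2⟩ := Finset.mem_Icc.mp hk
    obtain ⟨m, rfl⟩ : ∃ m, k = m + 1 := ⟨k-1, by omega⟩
    rw [uI_eq μ X m (by omega)]
    norm_num
  rw [Finset.sum_congr rfl hRHS, telescope n hn (fun j => rE μ X j) hr0]
  have hncast : ((n:ℝ)) ≠ 0 := by positivity
  have h1 : ent μ (restr X univ) = rE μ X n := by
    unfold rE
    rw [R_univ (fun b => ent μ (restr X b))]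
    simp [Nat.choose_self]
  have h2 : ∑ j : Fin n, ent μ (X j) = (n:ℝ) * rE μ X 1 := by
    unfold rE
    rw [R_one (fun b => ent μ (restr X b))]
    rw [Nat.choose_one_right]
    rw [← mul_assoc, mul_inv_cancel₀ hncast, one_mul]
    exact Finset.sum_congr rfl fun j _ => ent_single μ X j
  have h3 : ∑ j : Fin n, ent μ (restr X ({j} : Finset (Fin n))ᶜ) = (n:ℝ) * rE μ X (n-1) := by
    unfold rE
    rw [R_pred (fun b => ent μ (restr X b)) (by omega)]
    rw [Nat.choose_symm (by omega : 1 ≤ n), Nat.choose_one_right]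
    rw [← mul_assoc, mul_inv_cancel₀ hncast, one_mul]
  rw [Finset.sum_sub_distrib, h1, h2, h3]
  ring
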